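/- Let d be an odd prime, ε = 2π/d. For q ∈ {0,...,d-1}, m ∈ {0,...,d-1}, τ = ±1, define the vector |Ψ^{(q)}_{m,τ}⟩ = (1/√d)·∑_{j=0}^{d-1} e^{iχ^{(q)}_{m,τ,j}} |jq mod d⟩ ⊗ |τ⟩ in ℂ^d ⊗ ℂ², where χ^{(q)}_{m,τ,j} = -τ(qε/2)j² + (mε + qπ)j and |k⟩ = (1/√d)∑_x e^{ikεx}|x⟩. Then for q ≠ q' both nonzero, |⟨Ψ^{(q)}_{m,τ}|Ψ^{(q')}_{m',τ'}⟩|² = δ_{τ,τ'}·(1/d). -/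

import Mathlib

open Real

/-- The quantum-walk eigenvector (trivial coin `θ = 0`)
`|Ψ^{(q)}_{m,τ}⟩ = (1/√d) ∑_j e^{iχ^{(q)}_{m,τ,j}} |jq mod d⟩ ⊗ |τ⟩` in `ℂ^d ⊗ ℂ²`,
where `χ^{(q)}_{m,τ,j} = -τ(qε/2)j² + (mε+qπ)j`, `ε = 2π/d`,
`|k⟩ = (1/√d) ∑_x e^{ikεx}|x⟩`, and the coin index `s : Fin 2` encodes `τ = +1` (`s = 0`)
or `τ = -1` (`s = 1`). -/
noncomputable def qwPsi (d q m : ℕ) (s : Fin 2) : EuclideanSpace ℂ (Fin d × Fin 2) :=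
  WithLp.toLp 2 fun p =>
    (if p.2 = s then (1 : ℂ) else 0) * (1 / Real.sqrt d : ℝ) *
      ∑ j ∈ Finset.range d,
        Complex.exp (Complex.I *
            ((-(if s = 0 then (1 : ℝ) else -1) * ((q : ℝ) * (2 * Real.pi / d) / 2) * (j : ℝ) ^ 2
              + ((m : ℝ) * (2 * Real.pi / d) + (q : ℝ) * Real.pi) * (j : ℝ)))) *
          ((1 / Real.sqrt d : ℝ) *
            Complex.exp (Complex.I * (((j * q) % d : ℕ) : ℝ) * (2 * Real.pi / d) * ((p.1 : ℕ) : ℝ)))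

open Finset
open scoped ComplexConjugate

noncomputable def eMod (d : ℕ) (n : ℤ) : ℂ := Complex.exp (2 * Real.pi * Complex.I * n / d)

lemma eMod_add (d : ℕ) (a b : ℤ) : eMod d (a + b) = eMod d a * eMod d b := by
  rw [eMod, eMod, eMod, ← Complex.exp_add]
  congr 1
  push_cast
  ring

lemma eMod_zero (d : ℕ) : eMod d 0 = 1 := by simp [eMod]

lemma eMod_dvd (d : ℕ) (hd : 0 < d) {n : ℤ} (h : (d : ℤ) ∣ n) : eMod d n = 1 := by
  obtain ⟨k, rfl⟩ := h
  rw [eMod]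
  rw [show (2 * Real.pi * Complex.I * (((d : ℤ) * k : ℤ) : ℂ) / d : ℂ) = k * (2 * Real.pi * Complex.I) by
    push_cast
    have hd0 : (d : ℂ) ≠ 0 := by exact_mod_cast hd.ne'
    field_simp]
  exact_mod_cast Complex.exp_int_mul_two_pi_mul_I k

lemma eMod_congr (d : ℕ) (hd : 0 < d) {a b : ℤ} (h : (d : ℤ) ∣ a - b) : eMod d a = eMod d b := by
  have : eMod d (b + (a - b)) = eMod d b * eMod d (a - b) := eMod_add d b (a - b)
  rw [eMod_dvd d hd h, mul_one] at this
  simpa using this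

lemma conj_eMod (d : ℕ) (n : ℤ) : conj (eMod d n) = eMod d (-n) := by
  rw [eMod, eMod, ← Complex.exp_conj]
  congr 1
  simp only [map_div₀, map_mul, Complex.conj_I, map_ofNat, Complex.conj_ofReal, map_intCast,
    Complex.conj_natCast]
  push_cast
  ring

lemma eMod_ne_one (d : ℕ) (hd : 0 < d) {n : ℤ} (h : ¬ (d : ℤ) ∣ n) : eMod d n ≠ 1 := by
  intro he
  rw [eMod, Complex.exp_eq_one_iff] at he
  obtain ⟨k, hk⟩ := he
  apply h
  refine ⟨k, ?_⟩
  have hd0 : (d : ℂ) ≠ 0 := by exact_mod_cast hd.ne'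
  have hpi : (2 * Real.pi * Complex.I : ℂ) ≠ 0 := by
    simp [Real.pi_ne_zero, Complex.I_ne_zero]
  have hpi' : (2 * Real.pi * Complex.I : ℂ) ≠ 0 := hpi
  have : (n : ℂ) = d * k := by
    field_simp at hk
    have := mul_left_cancel₀ hpi (show 2 * Real.pi * Complex.I * (n:ℂ) = 2 * Real.pi * Complex.I * ((d:ℂ) * k) by rw [hk])
    exact this
  exact_mod_cast this

lemma eMod_pow (d : ℕ) (n : ℤ) (k : ℕ) : eMod d (n * k) = eMod d n ^ k := by
  rw [eMod, eMod, ← Complex.exp_nat_mul]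
  congr 1
  push_cast
  ring

lemma eMod_geom (d : ℕ) (hd : 0 < d) (n : ℤ) :
    ∑ k ∈ Finset.range d, eMod d (n * k) = if (d : ℤ) ∣ n then (d : ℂ) else 0 := by
  have hrw : ∀ k ∈ Finset.range d, eMod d (n * k) = eMod d n ^ k := fun k _ => eMod_pow d n k
  rw [Finset.sum_congr rfl hrw]
  split_ifs with h
  · rw [eMod_dvd d hd h]
    simp
  · have hne : eMod d n ≠ 1 := eMod_ne_one d hd h
    rw [geom_sum_eq hne]
    have : eMod d n ^ d = 1 := by
      rw [← eMod_pow, eMod_dvd d hd ⟨n, by ring⟩]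
    rw [this]
    simp

lemma sum_zmod (d : ℕ) [NeZero d] (f : ℕ → ℂ) :
    ∑ u : ZMod d, f (ZMod.val u) = ∑ j ∈ Finset.range d, f j := by
  obtain ⟨n, rfl⟩ := Nat.exists_eq_succ_of_ne_zero (NeZero.ne d)
  exact Fin.sum_univ_eq_sum_range (fun j => f j) (n + 1)

lemma gauss_core (d : ℕ) (hd : d.Prime) (hodd : Odd d) (c b : ℤ)
    (hc : ¬ (d : ℤ) ∣ c) (w : ℕ → ℤ)
    (hw : ∀ j ∈ Finset.range d, (d : ℤ) ∣ (w j - (c * j ^ 2 + b * j))) :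
    (∑ j ∈ Finset.range d, eMod d (w j)) * conj (∑ j ∈ Finset.range d, eMod d (w j))
      = (d : ℂ) := by
  haveI : NeZero d := ⟨hd.pos.ne'⟩
  have hd0 : 0 < d := hd.pos
  have hdp : Prime (d : ℤ) := Nat.prime_iff_prime_int.mp hd
  have hd2 : ¬ (d : ℤ) ∣ 2 := by
    intro h
    have h' : d ∣ 2 := by exact_mod_cast h
    have h2 := Nat.le_of_dvd (by norm_num) h'
    have h3 := hd.two_le
    have hd2' : d = 2 := by omega
    rw [hd2'] at hodd
    revert hodd
    decide
  have hvv : ∀ u : ZMod d, ((ZMod.val u : ℕ) : ZMod d) = u := ZMod.natCast_rightInverse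
  have h1 : ∑ j ∈ Finset.range d, eMod d (w j)
      = ∑ j ∈ Finset.range d, eMod d (c * j ^ 2 + b * j) :=
    Finset.sum_congr rfl (fun j hj => eMod_congr d hd0 (hw j hj))
  set F : ZMod d → ℂ := fun u => eMod d (c * (u.val : ℤ) ^ 2 + b * u.val) with hF
  have h2 : ∑ j ∈ Finset.range d, eMod d (c * j ^ 2 + b * j) = ∑ u : ZMod d, F u :=
    (sum_zmod d (fun j => eMod d (c * j ^ 2 + b * j))).symm
  rw [h1, h2, map_sum, Finset.sum_mul_sum, Finset.sum_comm]
  have key : ∀ k t : ZMod d, F (k + t) * conj (F k)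
      = eMod d (c * (t.val : ℤ) ^ 2 + b * t.val) * eMod d ((2 * c * t.val) * (k.val : ℤ)) := by
    intro k t
    rw [hF]
    simp only []
    rw [conj_eMod, ← eMod_add, ← eMod_add]
    apply eMod_congr d hd0
    have hv : (d : ℤ) ∣ (((k + t).val : ℤ) - ((k.val : ℤ) + (t.val : ℤ))) := by
      have h0 : ((((k + t).val : ℤ) - ((k.val : ℤ) + (t.val : ℤ)) : ℤ) : ZMod d) = 0 := by
        push_cast
        simp [hvv]
      exact (ZMod.intCast_zmod_eq_zero_iff_dvd _ d).mp h0
    obtain ⟨e, he⟩ := hv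
    have hv' : (((k + t).val : ℤ)) = (k.val : ℤ) + t.val + d * e := by linarith
    rw [hv']
    refine ⟨c * (k.val : ℤ) * e * 2 + c * (t.val : ℤ) * e * 2 + c * d * e ^ 2 + e * b, by ring⟩
  have h3 : ∀ k : ZMod d, ∑ u : ZMod d, F u * conj (F k)
      = ∑ t : ZMod d, F (k + t) * conj (F k) := fun k =>
    (Fintype.sum_equiv (Equiv.addLeft k) _ _ (fun t => rfl)).symm
  calc ∑ k : ZMod d, ∑ u : ZMod d, F u * conj (F k)
      = ∑ k : ZMod d, ∑ t : ZMod d,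
          eMod d (c * (t.val : ℤ) ^ 2 + b * t.val) * eMod d ((2 * c * t.val) * (k.val : ℤ)) := by
        refine Finset.sum_congr rfl fun k _ => ?_
        rw [h3 k]
        exact Finset.sum_congr rfl fun t _ => key k t
    _ = ∑ t : ZMod d, eMod d (c * (t.val : ℤ) ^ 2 + b * t.val)
          * ∑ k : ZMod d, eMod d ((2 * c * t.val) * (k.val : ℤ)) := by
        rw [Finset.sum_comm]
        exact Finset.sum_congr rfl fun t _ => (Finset.mul_sum _ _ _).symm
    _ = ∑ t : ZMod d, eMod d (c * (t.val : ℤ) ^ 2 + b * t.val)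
          * (if t = (0 : ZMod d) then (d : ℂ) else 0) := by
        refine Finset.sum_congr rfl fun t _ => ?_
        congr 1
        rw [sum_zmod d (fun j => eMod d ((2 * c * t.val) * (j : ℤ))), eMod_geom d hd0]
        congr 1
        simp only [eq_iff_iff]
        constructor
        · intro h
          rcases hdp.dvd_mul.mp h with h | h
          · rcases hdp.dvd_mul.mp (by rwa [show (2:ℤ)*c = 2*c from rfl] at h) with h | h
            · exact absurd h hd2
            · exact absurd h hc
          · have hnat : d ∣ t.val := by exact_mod_cast h
            have := ZMod.val_lt t
            have hv0 : t.val = 0 := Nat.eq_zero_of_dvd_of_lt hnat this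
            rwa [ZMod.val_eq_zero] at hv0
        · rintro rfl
          simp
    _ = (d : ℂ) := by
        rw [Finset.sum_congr rfl (fun t _ => (mul_ite (t = (0:ZMod d)) _ _ _))]
        simp only [mul_zero]
        rw [Finset.sum_ite_eq' Finset.univ (0 : ZMod d)
          (fun t => eMod d (c * (t.val : ℤ) ^ 2 + b * t.val) * (d : ℂ))]
        simp [ZMod.val_zero, eMod_zero]

noncomputable def Ee (d q m : ℕ) (s : Fin 2) (j : ℕ) : ℂ :=
  Complex.exp (Complex.I *
    (((-(if s = 0 then (1 : ℝ) else -1) * ((q : ℝ) * (2 * Real.pi / d) / 2) * (j : ℝ) ^ 2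
      + ((m : ℝ) * (2 * Real.pi / d) + (q : ℝ) * Real.pi) * (j : ℝ)) : ℝ) : ℂ))

noncomputable def phiF (d q m : ℕ) (s : Fin 2) (x : ℕ) : ℂ :=
  ∑ j ∈ Finset.range d, Ee d q m s j * eMod d ((((j * q) % d : ℕ) : ℤ) * x)

lemma qwPsi_apply (d q m : ℕ) (s : Fin 2) (p : Fin d × Fin 2) :
    qwPsi d q m s p
      = (if p.2 = s then (1 : ℂ) else 0) * (1 / (d : ℂ)) * phiF d q m s p.1 := by
  rw [qwPsi, PiLp.toLp_apply, phiF, Finset.mul_sum, Finset.mul_sum]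
  refine Finset.sum_congr rfl fun j hj => ?_
  have hW : Complex.exp (Complex.I * (((j * q) % d : ℕ) : ℝ) * (2 * Real.pi / d) * ((p.1 : ℕ) : ℝ))
      = eMod d ((((j * q) % d : ℕ) : ℤ) * (p.1 : ℕ)) := by
    rw [eMod]
    congr 1
    generalize (j * q) % d = k
    push_cast
    ring
  have hE : Complex.exp (Complex.I *
            ((-(if s = 0 then (1 : ℝ) else -1) * ((q : ℝ) * (2 * Real.pi / d) / 2) * (j : ℝ) ^ 2
              + ((m : ℝ) * (2 * Real.pi / d) + (q : ℝ) * Real.pi) * (j : ℝ)))) = Ee d q m s j := by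
    rw [Ee]
    congr 1
    push_cast
    ring
  rw [hW, hE]
  have hsq : ((1 / Real.sqrt d : ℝ) : ℂ) * ((1 / Real.sqrt d : ℝ) : ℂ) = 1 / (d : ℂ) := by
    rw [← Complex.ofReal_mul]
    rw [show (1 / Real.sqrt d) * (1 / Real.sqrt d) = 1 / (Real.sqrt d * Real.sqrt d) by ring]
    rw [Real.mul_self_sqrt (by positivity)]
    push_cast
    ring
  calc (if p.2 = s then (1:ℂ) else 0) * ((1 / Real.sqrt d : ℝ):ℂ) *
        (Ee d q m s j * (((1 / Real.sqrt d : ℝ):ℂ) * eMod d ((((j * q) % d : ℕ) : ℤ) * (p.1 : ℕ))))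
      = (if p.2 = s then (1:ℂ) else 0) *
          (((1 / Real.sqrt d : ℝ):ℂ) * ((1 / Real.sqrt d : ℝ):ℂ)) *
          (Ee d q m s j * eMod d ((((j * q) % d : ℕ) : ℤ) * (p.1 : ℕ))) := by ring
    _ = _ := by rw [hsq]

def Nint (d q q' m m' : ℕ) (τ : ℤ) (j j' : ℕ) : ℤ :=
  τ * q * j ^ 2 - (2 * m + q * d) * j - τ * q' * j' ^ 2 + (2 * m' + q' * d) * j'

lemma N_even (d q q' m m' : ℕ) (hodd : Odd d) (τ : ℤ) (hτ : τ = 1 ∨ τ = -1) (j j' : ℕ) :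
    Even (Nint d q q' m m' τ j j') := by
  have hdo : Odd (d : ℤ) := by exact_mod_cast hodd
  have e1 : Even ((j : ℤ) * ((j : ℤ) - d)) := by
    rcases Int.even_or_odd (j : ℤ) with h | h
    · exact h.mul_right _
    · exact (Odd.sub_odd h hdo).mul_left _
  have e2 : Even ((j' : ℤ) * ((j' : ℤ) - d)) := by
    rcases Int.even_or_odd (j' : ℤ) with h | h
    · exact h.mul_right _
    · exact (Odd.sub_odd h hdo).mul_left _
  rcases hτ with rfl | rfl
  · obtain ⟨u, hu⟩ := e1
    obtain ⟨v, hv⟩ := e2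
    exact ⟨q * u - m * j - q' * v + m' * j', by rw [Nint]; linear_combination (q:ℤ) * hu - (q':ℤ) * hv⟩
  · have e1' : Even ((j : ℤ) * ((j : ℤ) + d)) := by
      rcases Int.even_or_odd (j : ℤ) with h | h
      · exact h.mul_right _
      · exact (Odd.add_odd h hdo).mul_left _
    have e2' : Even ((j' : ℤ) * ((j' : ℤ) + d)) := by
      rcases Int.even_or_odd (j' : ℤ) with h | h
      · exact h.mul_right _
      · exact (Odd.add_odd h hdo).mul_left _
    obtain ⟨u, hu⟩ := e1'
    obtain ⟨v, hv⟩ := e2'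
    exact ⟨-(q * u) - m * j + q' * v + m' * j', by rw [Nint]; linear_combination -(q:ℤ) * hu + (q':ℤ) * hv⟩

lemma pair_eq (d q q' m m' : ℕ) (hd0 : 0 < d) (hodd : Odd d) (s : Fin 2) (j j' : ℕ) :
    conj (Ee d q m s j) * Ee d q' m' s j'
      = eMod d (Nint d q q' m m' (if s = 0 then 1 else -1) j j' / 2) := by
  set τ : ℤ := if s = 0 then 1 else -1 with hτdef
  have hτR : ((τ : ℤ) : ℝ) = (if s = 0 then (1 : ℝ) else -1) := by
    rw [hτdef]; split_ifs <;> simp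
  obtain ⟨r, hr⟩ := N_even d q q' m m' hodd τ (by rw [hτdef]; split_ifs <;> simp) j j'
  have hNr : Nint d q q' m m' τ j j' / 2 = r := by omega
  have h2r : (2 * r : ℤ) = Nint d q q' m m' τ j j' := by omega
  have hdR : (d : ℝ) ≠ 0 := by positivity
  rw [Ee, Ee, ← Complex.exp_conj, ← Complex.exp_add, eMod, hNr]
  congr 1
  rw [map_mul, Complex.conj_I, Complex.conj_ofReal]
  set θ : ℝ := (-(if s = 0 then (1 : ℝ) else -1) * ((q : ℝ) * (2 * Real.pi / d) / 2) * (j : ℝ) ^ 2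
      + ((m : ℝ) * (2 * Real.pi / d) + (q : ℝ) * Real.pi) * (j : ℝ)) with hθ
  set θ' : ℝ := (-(if s = 0 then (1 : ℝ) else -1) * ((q' : ℝ) * (2 * Real.pi / d) / 2) * (j' : ℝ) ^ 2
      + ((m' : ℝ) * (2 * Real.pi / d) + (q' : ℝ) * Real.pi) * (j' : ℝ)) with hθ'
  have hN : ((Nint d q q' m m' τ j j' : ℤ) : ℝ)
      = ((τ:ℤ):ℝ) * q * (j:ℝ) ^ 2 - (2 * m + q * d) * (j:ℝ) - ((τ:ℤ):ℝ) * q' * (j':ℝ) ^ 2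
        + (2 * m' + q' * d) * (j':ℝ) := by
    rw [Nint]; push_cast; ring
  have hθval : θ = Real.pi / d * (-(((τ:ℤ):ℝ)) * q * (j:ℝ)^2 + (2*m + q*d) * (j:ℝ)) := by
    rw [hθ, ← hτR]; field_simp
  have hθval' : θ' = Real.pi / d * (-(((τ:ℤ):ℝ)) * q' * (j':ℝ)^2 + (2*m' + q'*d) * (j':ℝ)) := by
    rw [hθ', ← hτR]; field_simp
  have hreal : θ' - θ = 2 * Real.pi * (r : ℝ) / d := by
    have h2rR : ((2 * r : ℤ) : ℝ) = ((Nint d q q' m m' τ j j' : ℤ) : ℝ) := by exact_mod_cast h2r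
    rw [hθval, hθval']
    rw [show Real.pi / d * (-(((τ:ℤ):ℝ)) * q' * (j':ℝ)^2 + (2*m' + q'*d) * (j':ℝ))
        - Real.pi / d * (-(((τ:ℤ):ℝ)) * q * (j:ℝ)^2 + (2*m + q*d) * (j:ℝ))
        = Real.pi / d * (((Nint d q q' m m' τ j j' : ℤ) : ℝ)) by rw [hN]; ring]
    rw [← h2rR]
    push_cast
    ring
  calc -Complex.I * (θ : ℂ) + Complex.I * (θ' : ℂ)
      = Complex.I * (((θ' - θ : ℝ) : ℂ)) := by push_cast; ring
    _ = 2 * Real.pi * Complex.I * (r : ℂ) / d := by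
        rw [hreal]
        push_cast
        have hdC : (d : ℂ) ≠ 0 := by exact_mod_cast hd0.ne'
        field_simp

theorem qwPsi_overlap (d : ℕ) (hd : d.Prime) (hodd : Odd d)
    (q q' m m' : ℕ) (hq : q < d) (hq' : q' < d) (hm : m < d) (hm' : m' < d)
    (hq0 : q ≠ 0) (hq'0 : q' ≠ 0) (hne : q ≠ q') (s s' : Fin 2) :
    ‖(inner ℂ (qwPsi d q m s) (qwPsi d q' m' s') : ℂ)‖ ^ 2
      = if s = s' then 1 / (d : ℝ) else 0 := by
  haveI : NeZero d := ⟨hd.pos.ne'⟩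
  haveI : Fact d.Prime := ⟨hd⟩
  have hd0 : 0 < d := hd.pos
  have hdC : (d : ℂ) ≠ 0 := by exact_mod_cast hd0.ne'
  have hdR : (d : ℝ) ≠ 0 := by positivity
  have hinner : (inner ℂ (qwPsi d q m s) (qwPsi d q' m' s') : ℂ)
      = ∑ x : Fin d, ∑ cc : Fin 2,
          conj (qwPsi d q m s (x, cc)) * qwPsi d q' m' s' (x, cc) := by
    rw [PiLp.inner_apply, Fintype.sum_prod_type]
    simp [RCLike.inner_apply, mul_comm]
  by_cases hss : s = s'
  swap
  · rw [if_neg hss]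
    have hz : ∀ x : Fin d, ∀ cc : Fin 2,
        conj (qwPsi d q m s (x, cc)) * qwPsi d q' m' s' (x, cc) = 0 := by
      intro x cc
      rw [qwPsi_apply, qwPsi_apply]
      by_cases h : cc = s
      · rw [if_neg (show ¬ ((x, cc).2 = s') by simp only []; rw [h]; exact hss)]
        ring
      · rw [if_neg (show ¬ ((x, cc).2 = s) from h)]
        simp
    rw [hinner]
    simp [hz]
  · subst hss
    rw [if_pos rfl]
    set τ : ℤ := if s = 0 then 1 else -1 with hτdef
    have hqz : (q : ZMod d) ≠ 0 := by
      rw [Ne, ZMod.natCast_eq_zero_iff]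
      exact fun hdvd => hq0 (Nat.eq_zero_of_dvd_of_lt hdvd hq)
    have hq'z : (q' : ZMod d) ≠ 0 := by
      rw [Ne, ZMod.natCast_eq_zero_iff]
      exact fun hdvd => hq'0 (Nat.eq_zero_of_dvd_of_lt hdvd hq')
    have hqq' : (q : ZMod d) ≠ (q' : ZMod d) := by
      intro h
      apply hne
      have h2 := congrArg ZMod.val h
      rwa [ZMod.val_cast_of_lt hq, ZMod.val_cast_of_lt hq'] at h2
    set α : ZMod d := (q : ZMod d) * (q' : ZMod d)⁻¹ with hα
    set σfun : ℕ → ℕ := fun j => ((j : ZMod d) * α).val with hσdef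
    have hσlt : ∀ j, σfun j < d := fun j => ZMod.val_lt _
    have hσcast : ∀ j : ℕ, ((σfun j : ℕ) : ZMod d) = (j : ZMod d) * α :=
      fun j => ZMod.natCast_rightInverse _
    have hchar : ∀ j j' : ℕ, j' < d → (((j' * q') % d = (j * q) % d) ↔ j' = σfun j) := by
      intro j j' hj'
      constructor
      · intro h
        have hc : ((j' * q' : ℕ) : ZMod d) = ((j * q : ℕ) : ZMod d) :=
          (ZMod.natCast_eq_natCast_iff _ _ _).mpr h
        have hcc : (j' : ZMod d) = (j : ZMod d) * α := by
          push_cast at hc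
          rw [hα]
          field_simp [hq'z]
          linear_combination hc
        rw [← ZMod.val_cast_of_lt hj', hcc, hσdef]
      · rintro rfl
        have hcc : ((σfun j * q' : ℕ) : ZMod d) = ((j * q : ℕ) : ZMod d) := by
          push_cast
          rw [hσcast, hα]
          field_simp
        exact (ZMod.natCast_eq_natCast_iff _ _ _).mp hcc
    set T : ℂ := ∑ j ∈ Finset.range d, eMod d (Nint d q q' m m' τ j (σfun j) / 2) with hT
    -- inner product equals (1/d) * T
    have hinnerT : (inner ℂ (qwPsi d q m s) (qwPsi d q' m' s) : ℂ) = (1 / (d:ℂ)) * T := by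
      rw [hinner]
      have hx : ∀ x : Fin d, ∑ cc : Fin 2,
          conj (qwPsi d q m s (x, cc)) * qwPsi d q' m' s (x, cc)
          = (1/(d:ℂ))^2 * (conj (phiF d q m s x) * phiF d q' m' s x) := by
        intro x
        have hterm : ∀ cc : Fin 2, conj (qwPsi d q m s (x, cc)) * qwPsi d q' m' s (x, cc)
            = if cc = s then (1/(d:ℂ))^2 * (conj (phiF d q m s x) * phiF d q' m' s x) else 0 := by
          intro cc
          rw [qwPsi_apply, qwPsi_apply]
          by_cases h : cc = s
          · rw [if_pos (show ((x,cc).2 = s) from h), if_pos (show ((x,cc).2 = s) from h),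
              ]
            rw [map_mul, map_mul]
            have : conj ((1:ℂ)) = 1 := by simp
            have hcd : conj (1/(d:ℂ)) = 1/(d:ℂ) := by
              simp [map_div₀, Complex.conj_natCast]
            rw [this, hcd]
            ring
          · rw [if_neg (show ¬((x,cc).2 = s) from h)]
            simp [h]
        rw [Finset.sum_congr rfl (fun cc _ => hterm cc)]
        rw [Finset.sum_ite_eq' Finset.univ s
          (fun _ => (1/(d:ℂ))^2 * (conj (phiF d q m s x) * phiF d q' m' s x))]
        simp
      rw [Finset.sum_congr rfl (fun x _ => hx x)]
      rw [← Finset.mul_sum]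
      -- now ∑ x : Fin d, conj (phiF ..) * phiF ..
      have hphix : ∀ x : ℕ, conj (phiF d q m s x) * phiF d q' m' s x
          = ∑ j ∈ Finset.range d, ∑ j' ∈ Finset.range d,
              (conj (Ee d q m s j) * Ee d q' m' s j') *
                eMod d (((((j' * q') % d : ℕ) : ℤ) - (((j * q) % d : ℕ) : ℤ)) * x) := by
        intro x
        rw [phiF, phiF, map_sum, Finset.sum_mul_sum]
        refine Finset.sum_congr rfl fun j hj => Finset.sum_congr rfl fun j' hj' => ?_
        rw [map_mul, conj_eMod]
        rw [show (((((j' * q') % d : ℕ) : ℤ) - (((j * q) % d : ℕ) : ℤ)) * (x:ℤ))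
            = (-((((j * q) % d : ℕ) : ℤ) * x)) + ((((j' * q') % d : ℕ) : ℤ) * x) by ring]
        rw [eMod_add]
        ring
      have hX : ∑ x : Fin d, conj (phiF d q m s (x:ℕ)) * phiF d q' m' s (x:ℕ)
          = (d : ℂ) * T := by
        rw [show (∑ x : Fin d, conj (phiF d q m s (x:ℕ)) * phiF d q' m' s (x:ℕ))
            = ∑ x ∈ Finset.range d, conj (phiF d q m s x) * phiF d q' m' s x from
          Fin.sum_univ_eq_sum_range (fun x => conj (phiF d q m s x) * phiF d q' m' s x) d]
        rw [Finset.sum_congr rfl (fun x _ => hphix x)]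
        rw [Finset.sum_comm]
        have hj : ∀ j ∈ Finset.range d,
            (∑ x ∈ Finset.range d, ∑ j' ∈ Finset.range d,
              (conj (Ee d q m s j) * Ee d q' m' s j') *
                eMod d (((((j' * q') % d : ℕ) : ℤ) - (((j * q) % d : ℕ) : ℤ)) * x))
            = (d:ℂ) * eMod d (Nint d q q' m m' τ j (σfun j) / 2) := by
          intro j hjmem
          rw [Finset.sum_comm]
          have hj' : ∀ j' ∈ Finset.range d,
              (∑ x ∈ Finset.range d,
                (conj (Ee d q m s j) * Ee d q' m' s j') *
                  eMod d (((((j' * q') % d : ℕ) : ℤ) - (((j * q) % d : ℕ) : ℤ)) * x))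
              = if j' = σfun j then
                  (conj (Ee d q m s j) * Ee d q' m' s j') * (d:ℂ) else 0 := by
            intro j' hj'mem
            rw [← Finset.mul_sum]
            rw [eMod_geom d hd0 ((((j' * q') % d : ℕ) : ℤ) - (((j * q) % d : ℕ) : ℤ))]
            have hiff : ((d:ℤ) ∣ ((((j' * q') % d : ℕ) : ℤ) - (((j * q) % d : ℕ) : ℤ)))
                ↔ j' = σfun j := by
              constructor
              · intro hdvd
                have h1 : (j' * q') % d < d := Nat.mod_lt _ hd0
                have h2 : (j * q) % d < d := Nat.mod_lt _ hd0
                have hΔ : ((((j' * q') % d : ℕ) : ℤ) - (((j * q) % d : ℕ) : ℤ)) = 0 :=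
                  Int.eq_zero_of_abs_lt_dvd hdvd (by rw [abs_lt]; omega)
                have heq : (j' * q') % d = (j * q) % d := by omega
                exact (hchar j j' (Finset.mem_range.mp hj'mem)).mp heq
              · rintro rfl
                have heq := (hchar j (σfun j) (hσlt j)).mpr rfl
                exact ⟨0, by omega⟩
            by_cases hcase : j' = σfun j
            · rw [if_pos hcase, if_pos (hiff.mpr hcase)]
            · rw [if_neg hcase, if_neg (fun hh => hcase (hiff.mp hh))]
              ring
          rw [Finset.sum_congr rfl hj']
          rw [Finset.sum_ite_eq' (Finset.range d) (σfun j)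
            (fun j' => (conj (Ee d q m s j) * Ee d q' m' s j') * (d:ℂ))]
          rw [if_pos (Finset.mem_range.mpr (hσlt j))]
          rw [pair_eq d q q' m m' hd0 hodd s j (σfun j)]
          rw [← hτdef]
          ring
        rw [Finset.sum_congr rfl hj]
        rw [← Finset.mul_sum, hT]
      rw [hX]
      field_simp
    -- the Gauss sum part
    set a : ℤ := (α.val : ℤ) with hadef
    have hacast : ((a : ℤ) : ZMod d) = α := by
      rw [hadef]
      push_cast
      exact ZMod.natCast_rightInverse α
    set eH : ℤ := ((d:ℤ) + 1) / 2 with heH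
    have h2eH : 2 * eH = (d:ℤ) + 1 := by
      obtain ⟨k, hk⟩ := hodd
      omega
    set c : ℤ := eH * τ * ((q:ℤ) - (q':ℤ) * a^2) with hc
    set bb : ℤ := eH * (2*(m':ℤ)*a + (q':ℤ)*d*a - 2*(m:ℤ) - (q:ℤ)*d) with hbb
    have hdp : Prime (d : ℤ) := Nat.prime_iff_prime_int.mp hd
    have hd2 : ¬ (d : ℤ) ∣ 2 := by
      intro h
      have h' : d ∣ 2 := by exact_mod_cast h
      have h2 := Nat.le_of_dvd (by norm_num) h'
      have h3 := hd.two_le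
      have hd2' : d = 2 := by omega
      rw [hd2'] at hodd
      revert hodd
      decide
    have hqsub : ((q:ZMod d) - (q':ZMod d) * α^2) ≠ 0 := by
      have hval : (q:ZMod d) - (q':ZMod d) * α^2
          = (q:ZMod d) * ((q':ZMod d))⁻¹ * ((q':ZMod d) - (q:ZMod d)) := by
        rw [hα]
        field_simp
      rw [hval]
      exact mul_ne_zero (mul_ne_zero hqz (inv_ne_zero hq'z)) (sub_ne_zero.mpr (Ne.symm hqq'))
    have hcne : ¬ (d:ℤ) ∣ c := by
      intro hdvd
      have hzero : ((c : ℤ) : ZMod d) = 0 := (ZMod.intCast_zmod_eq_zero_iff_dvd _ _).mpr hdvd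
      rw [hc] at hzero
      push_cast at hzero
      rw [hacast] at hzero
      have heHz : ((eH : ℤ) : ZMod d) ≠ 0 := by
        intro h0
        have h1 : ((2 * eH : ℤ) : ZMod d) = 0 := by push_cast [h0]; ring
        rw [h2eH] at h1
        push_cast at h1
        simp [ZMod.natCast_self] at h1
      have hτz : ((τ : ℤ) : ZMod d) ≠ 0 := by
        rw [hτdef]
        split_ifs <;> simp
      rcases mul_eq_zero.mp hzero with h | h
      · rcases mul_eq_zero.mp h with h' | h'
        · exact heHz h'
        · exact hτz h'
      · exact hqsub h
    have hw : ∀ j ∈ Finset.range d,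
        (d:ℤ) ∣ (Nint d q q' m m' τ j (σfun j) / 2 - (c * j^2 + bb * j)) := by
      intro j hjmem
      obtain ⟨r, hr⟩ := N_even d q q' m m' hodd τ (by rw [hτdef]; split_ifs <;> simp) j (σfun j)
      have hNr : Nint d q q' m m' τ j (σfun j) / 2 = r := by omega
      have h2r : 2 * r = Nint d q q' m m' τ j (σfun j) := by omega
      -- d ∣ σ j - a * j
      have hσdvd : (d:ℤ) ∣ ((σfun j : ℕ) : ℤ) - a * j := by
        have : ((((σfun j : ℕ) : ℤ) - a * j : ℤ) : ZMod d) = 0 := by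
          push_cast
          rw [hσcast j, hacast]
          ring
        exact (ZMod.intCast_zmod_eq_zero_iff_dvd _ _).mp this
      obtain ⟨e, he⟩ := hσdvd
      have hσval : ((σfun j : ℕ) : ℤ) = a * j + d * e := by linarith
      -- N - P = d * W1
      set P : ℤ := τ * ((q:ℤ) - (q':ℤ) * a^2) * j^2
        + (2*(m':ℤ)*a + (q':ℤ)*d*a - 2*(m:ℤ) - (q:ℤ)*d) * j with hP
      have hNP : Nint d q q' m m' τ j (σfun j) - P
          = d * (e * (-(τ * (q':ℤ)) * (2*a*j + d*e) + 2*(m':ℤ) + (q':ℤ)*d)) := by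
        rw [Nint, hP, hσval]
        ring
      -- 2*(c j² + bb j) - P = d * P'
      have hcb : 2 * (c * j^2 + bb * j) - P
          = d * (τ * ((q:ℤ) - (q':ℤ) * a^2) * j^2
              + (2*(m':ℤ)*a + (q':ℤ)*d*a - 2*(m:ℤ) - (q:ℤ)*d) * j) := by
        rw [hc, hbb, hP]
        linear_combination (τ * ((q:ℤ) - (q':ℤ) * a^2) * j^2
          + (2*(m':ℤ)*a + (q':ℤ)*d*a - 2*(m:ℤ) - (q:ℤ)*d) * j) * h2eH
      have hdvd2 : (d:ℤ) ∣ 2 * (Nint d q q' m m' τ j (σfun j) / 2 - (c * j^2 + bb * j)) := by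
        have : 2 * (Nint d q q' m m' τ j (σfun j) / 2 - (c * j^2 + bb * j))
            = (Nint d q q' m m' τ j (σfun j) - P) - (2 * (c * j^2 + bb * j) - P) := by
          rw [hNr]
          linarith [h2r]
        rw [this, hNP, hcb]
        exact dvd_sub (Dvd.intro _ rfl) (Dvd.intro _ rfl)
      rcases hdp.dvd_mul.mp hdvd2 with h | h
      · exact absurd h hd2
      · exact h
    have hTT : T * conj T = (d : ℂ) := by
      rw [hT]
      exact gauss_core d hd hodd c bb hcne
        (fun j => Nint d q q' m m' τ j (σfun j) / 2) hw
    -- finish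
    rw [hinnerT]
    rw [norm_mul]
    have habs1 : ‖(1/(d:ℂ))‖ = 1/(d:ℝ) := by
      rw [norm_div]
      simp
    have habsT : ‖T‖ ^ 2 = (d:ℝ) := by
      have h1 : ((Complex.normSq T : ℝ) : ℂ) = ((d:ℝ) : ℂ) := by
        rw [← Complex.mul_conj, hTT]
        push_cast
        ring
      have h2 : Complex.normSq T = (d:ℝ) := by exact_mod_cast h1
      rw [Complex.sq_norm, h2]
    rw [habs1, mul_pow, habsT]
    field_simp
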